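/- Let n ≥ 1 and let δ, ε ≥ 0 satisfy δ + (n−1)ε ≤ 1. If F = (δ−ε)I + εJ (the n×n matrix with diagonal entries δ and off-diagonal entries ε), then det(I − F) = (1 − δ − (n−1)ε)(1 − δ + ε)^{n−1}; in particular, the lower bound det(I−E) ≥ (1 − δ − (n−1)ε)(1 − δ + ε)^{n−1} for matrices E with |e_{ij}| ≤ ε (i ≠ j) and |e_{ii}| ≤ δ is attained. -/

import Mathlib

open Matrix

lemma aux_det_smul_one_sub_smul_J (n : ℕ) (a b : ℝ) (ha : a ≠ 0) :
    (a • (1 : Matrix (Fin n) (Fin n) ℝ) - b • (Matrix.of fun _ _ => (1 : ℝ))).det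
      = a ^ n * (1 - n * b / a) := by
  have h1 : (1 : Matrix (Fin n) (Fin n) ℝ) - (b/a) • (Matrix.of fun _ _ => (1 : ℝ))
      = 1 + Matrix.replicateCol (Fin 1) (fun _ => -(b/a)) * Matrix.replicateRow (Fin 1) (fun _ => (1:ℝ)) := by
    ext i j
    simp [Matrix.mul_apply, Matrix.sub_apply, Matrix.add_apply, sub_eq_add_neg]
  have h2 : a • ((1 : Matrix (Fin n) (Fin n) ℝ) - (b/a) • (Matrix.of fun _ _ => (1 : ℝ)))
      = a • (1 : Matrix (Fin n) (Fin n) ℝ) - b • (Matrix.of fun _ _ => (1 : ℝ)) := by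
    rw [smul_sub, smul_smul, mul_div_cancel₀ _ ha]
  have h3 : (1 + (fun (_ : Fin n) => (1:ℝ)) ⬝ᵥ fun _ => -(b/a)) = 1 - n * b / a := by
    simp [dotProduct]
    ring
  rw [← h2, Matrix.det_smul, h1]
  erw [Matrix.det_one_add_replicateCol_mul_replicateRow]
  rw [h3, Fintype.card_fin]

theorem det_lower_bound_two_sided_diag_sharp
    (n : ℕ) (hn : 1 ≤ n) (δ ε : ℝ) (hδ : 0 ≤ δ) (hε : 0 ≤ ε)
    (hsize : δ + ((n : ℝ) - 1) * ε ≤ 1)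
    (F : Matrix (Fin n) (Fin n) ℝ)
    (hF : F = (δ - ε) • (1 : Matrix (Fin n) (Fin n) ℝ)
            + ε • (Matrix.of fun _ _ => (1 : ℝ))) :
    ((1 : Matrix (Fin n) (Fin n) ℝ) - F).det
        = (1 - δ - ((n : ℝ) - 1) * ε) * (1 - δ + ε) ^ (n - 1)
      ∧ (∀ i j, i ≠ j → |F i j| ≤ ε) ∧ (∀ i, |F i i| ≤ δ) := by
  refine ⟨?_, ?_, ?_⟩
  · have key : (1 : Matrix (Fin n) (Fin n) ℝ) - F
        = (1 - δ + ε) • (1 : Matrix (Fin n) (Fin n) ℝ) - ε • (Matrix.of fun _ _ => (1 : ℝ)) := by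
      rw [hF]; ext i j; simp [Matrix.sub_apply, Matrix.add_apply, Matrix.one_apply]
      ring_nf
      by_cases h : i = j <;> simp [h] <;> ring
    set a := 1 - δ + ε with ha_def
    by_cases ha : a = 0
    · -- then ε = 0, δ = 1
      have hε0 : ε = 0 := by nlinarith [(Nat.one_le_cast (α := ℝ)).mpr hn]
      have hδ1 : δ = 1 := by simp [ha_def] at ha; linarith
      have : (1 : Matrix (Fin n) (Fin n) ℝ) - F = 0 := by
        rw [key, ha, hε0]; simp
      rw [this, hε0, hδ1]
      simp
      exact Matrix.det_eq_zero_of_row_eq_zero ⟨0, hn⟩ (fun j => rfl)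
    · rw [key, aux_det_smul_one_sub_smul_J n a ε ha]
      have hn' : (n : ℝ) ≥ 1 := Nat.one_le_cast.mpr hn
      have hpow : a ^ n = a ^ (n - 1) * a := by
        conv_lhs => rw [← Nat.sub_add_cancel hn]
        rw [pow_succ]
      rw [hpow]
      field_simp
      ring
  · intro i j hij
    rw [hF]; simp [Matrix.one_apply, hij, abs_of_nonneg hε]
  · intro i
    rw [hF]; simp [Matrix.one_apply]
    rw [abs_of_nonneg] <;> linarith
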